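/- Let J be a finite index set, r ∉ J, a : J → ℝ with a_j ≥ 0 for all j ∈ J, b ∈ ℝ, and P ⊆ J. Set b̃ := b − Σ_{j∈P} a_j and assume 0 < b̃ < 1. Then: (i) every x ∈ {0,1}^{J ∪ {r}} satisfying x_r + Σ_{j∈J} a_j x_j ≥ b also satisfies the weakened and coefficient-tightened constraint b̃·x_r + Σ_{j∈J∖P} min(a_j, b̃)·x_j ≥ b̃; and (ii) every x ∈ ℝ^{J ∪ {r}} with x_j = 0 for all j ∈ J∖P that satisfies b̃·x_r + Σ_{j∈J∖P} min(a_j, b̃)·x_j ≥ b̃ has x_r ≥ 1. -/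
import Mathlib


/-- Proposition 2: validity and tight propagation of the weakened and
coefficient-tightened reason constraint for pure binary programs. -/
theorem coefTight_reduction_valid_and_tight
    {ι : Type*} [DecidableEq ι] (J : Finset ι) (r : ι) (hr : r ∉ J)
    (a : ι → ℝ) (ha : ∀ j ∈ J, 0 ≤ a j) (b : ℝ)
    (P : Finset ι) (hP : P ⊆ J)
    (btil : ℝ) (hbt : btil = b - ∑ j ∈ P, a j)
    (h0 : 0 < btil) (h1 : btil < 1) :
    (∀ x : ι → ℝ, (∀ j ∈ insert r J, x j = 0 ∨ x j = 1) →
        x r + ∑ j ∈ J, a j * x j ≥ b →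
        btil * x r + ∑ j ∈ J \ P, min (a j) btil * x j ≥ btil) ∧
    (∀ x : ι → ℝ, (∀ j ∈ J \ P, x j = 0) →
        btil * x r + ∑ j ∈ J \ P, min (a j) btil * x j ≥ btil →
        x r ≥ 1) := by
  constructor
  · intro x hx hge
    have hx01 : ∀ j ∈ J, x j = 0 ∨ x j = 1 := fun j hj => hx j (Finset.mem_insert_of_mem hj)
    have hxr := hx r (Finset.mem_insert_self r J)
    have hnonneg : ∀ j ∈ J \ P, 0 ≤ min (a j) btil * x j := by
      intro j hj
      have hjJ := (Finset.mem_sdiff.mp hj).1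
      have haj := ha j hjJ
      have hmin : 0 ≤ min (a j) btil := le_min haj h0.le
      rcases hx01 j hjJ with h | h <;> simp [h, hmin]
    rcases hxr with h0r | h1r
    · -- x r = 0
      by_cases hex : ∃ j ∈ J \ P, x j = 1 ∧ btil ≤ a j
      · obtain ⟨j, hj, hxj, hle⟩ := hex
        have hkey : btil ≤ ∑ j ∈ J \ P, min (a j) btil * x j := by
          have : min (a j) btil * x j = btil := by rw [min_eq_right hle, hxj, mul_one]
          calc btil = min (a j) btil * x j := this.symm
            _ ≤ ∑ j ∈ J \ P, min (a j) btil * x j :=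
              Finset.single_le_sum hnonneg hj
        rw [h0r]; linarith
      · push_neg at hex
        have heq : ∀ j ∈ J \ P, min (a j) btil * x j = a j * x j := by
          intro j hj
          rcases hx01 j (Finset.mem_sdiff.mp hj).1 with h | h
          · simp [h]
          · rw [min_eq_left (hex j hj h).le]
        rw [Finset.sum_congr rfl heq]
        have hsplit : ∑ j ∈ J \ P, a j * x j + ∑ j ∈ P, a j * x j = ∑ j ∈ J, a j * x j :=
          Finset.sum_sdiff hP
        have hPle : ∑ j ∈ P, a j * x j ≤ ∑ j ∈ P, a j := by
          apply Finset.sum_le_sum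
          intro j hj
          rcases hx01 j (hP hj) with h | h <;> simp [h, ha j (hP hj)]
        rw [h0r]; linarith
    · have hsum : 0 ≤ ∑ j ∈ J \ P, min (a j) btil * x j := Finset.sum_nonneg hnonneg
      rw [h1r]; linarith
  · intro x hx hge
    have hz : ∑ j ∈ J \ P, min (a j) btil * x j = 0 :=
      Finset.sum_eq_zero fun j hj => by rw [hx j hj, mul_zero]
    rw [hz, add_zero] at hge
    nlinarith
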